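/- For η ∈ (0, 3/2) define ξ(η) = η·(1 + 2η²/9)^(−3/2), v(η) = 2η/3, z(η) = (4η²/3)/(1 − 4η²/9), w(η) = (2/3)·(1 + 2η²/9)^(3/2), A(η) = 1 − 4η²/9 and D(η) = (1 + 2η²/9)^(−1/2). Then for all η ∈ (0, 3/2) the following four identities hold (where ′ = d/dη): (i) ξ(η)·((−1 + D·w)·z)′(η) = −D(η)w(η)z(η)·ξ′(η); (ii) ξ(η)·(−1 + D(η)w(η))·w′(η) = [w(η) − D(η)·(w(η)² + (1 − ξ(η)²w(η)²)(1 − A(η))/(2ξ(η)²A(η)))]·ξ′(η); (iii) ξ(η)·A′(η) = (−z(η) + 1 − A(η))·ξ′(η); (iv) ξ(η)·D′(η) = [D(η)/(2A(η))]·(2(1 − A(η)) − (1 − v(η)²)·z(η))·ξ′(η). Equivalently, regarded as functions of ξ alone via the strictly increasing map η ↦ ξ(η), the quadruple (z, w, A, D) is a time-independent (stationary) solution of the pressureless STV PDE, with v = ξ·w. -/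

import Mathlib

open Real Set

/-- Schwarzschild similarity variable `ξ` of the critical Friedmann spacetime,
as a function of `η = r̄/t`. -/
noncomputable def xiF (η : ℝ) : ℝ := η * (1 + 2 * η ^ 2 / 9) ^ ((-3 : ℝ) / 2)

/-- SSC coordinate velocity `v` of the critical Friedmann spacetime. -/
noncomputable def vF (η : ℝ) : ℝ := 2 * η / 3

/-- Density variable `z = κρr̄²/(1 − v²)` of the critical Friedmann spacetime. -/
noncomputable def zF (η : ℝ) : ℝ := (4 * η ^ 2 / 3) / (1 - 4 * η ^ 2 / 9)

/-- Velocity variable `w = v/ξ` of the critical Friedmann spacetime. -/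
noncomputable def wF (η : ℝ) : ℝ := (2 / 3) * (1 + 2 * η ^ 2 / 9) ^ ((3 : ℝ) / 2)

/-- Metric component `A` of the critical Friedmann spacetime. -/
noncomputable def AF (η : ℝ) : ℝ := 1 - 4 * η ^ 2 / 9

/-- Metric variable `D = √(AB)` of the critical Friedmann spacetime. -/
noncomputable def DF (η : ℝ) : ℝ := (1 + 2 * η ^ 2 / 9) ^ ((-1 : ℝ) / 2)

set_option maxHeartbeats 1000000 in
/-- The critical (`k = 0`) pressureless Friedmann spacetime, parametrized by `η`,
is a stationary solution of the pressureless STV PDE: the four stationary STV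
equations hold identically in `η` (with `d/dξ` converted to `d/dη` via the chain
rule), and `v = ξ w`. -/
theorem critical_Friedmann_stationary_STV (η : ℝ) (hη : η ∈ Ioo (0 : ℝ) (3 / 2)) :
    xiF η * deriv (fun s => (-1 + DF s * wF s) * zF s) η
      = -(DF η * wF η * zF η) * deriv xiF η ∧
    xiF η * (-1 + DF η * wF η) * deriv wF η
      = (wF η - DF η * ((wF η) ^ 2
          + (1 - (xiF η) ^ 2 * (wF η) ^ 2) * (1 - AF η) / (2 * (xiF η) ^ 2 * AF η)))
        * deriv xiF η ∧
    xiF η * deriv AF η = (-zF η + 1 - AF η) * deriv xiF η ∧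
    xiF η * deriv DF η
      = (DF η / (2 * AF η)) * (2 * (1 - AF η) - (1 - (vF η) ^ 2) * zF η)
        * deriv xiF η ∧
    vF η = xiF η * wF η := by
  obtain ⟨h0, h32⟩ := hη
  have hu : (0:ℝ) < 1 + 2 * η ^ 2 / 9 := by positivity
  have hune : (1:ℝ) + 2 * η ^ 2 / 9 ≠ 0 := ne_of_gt hu
  set r : ℝ := (1 + 2 * η ^ 2 / 9) ^ ((1:ℝ)/2) with hr_def
  have hrpos : 0 < r := Real.rpow_pos_of_pos hu _
  have hrne : r ≠ 0 := ne_of_gt hrpos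
  have hr2 : r ^ 2 = 1 + 2 * η ^ 2 / 9 := by
    rw [hr_def, ← Real.rpow_natCast ((1 + 2 * η ^ 2 / 9) ^ ((1:ℝ)/2)) 2,
      ← Real.rpow_mul hu.le]
    norm_num
  have hApos : (0:ℝ) < 1 - 4 * η ^ 2 / 9 := by nlinarith
  have hAne : (1:ℝ) - 4 * η ^ 2 / 9 ≠ 0 := ne_of_gt hApos
  have hηne : η ≠ 0 := ne_of_gt h0
  obtain ⟨a, ha⟩ : ∃ a : ℝ, a = 1 - 4 * η ^ 2 / 9 := ⟨_, rfl⟩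
  have hane : a ≠ 0 := ha ▸ hAne
  -- exponent rewrites
  have e32 : (1 + 2 * η ^ 2 / 9) ^ ((3:ℝ)/2) = (1 + 2 * η ^ 2 / 9) * r := by
    rw [hr_def, show ((3:ℝ)/2) = 1 + 1/2 by norm_num, Real.rpow_add hu, Real.rpow_one]
  have em12 : (1 + 2 * η ^ 2 / 9) ^ ((-1:ℝ)/2) = r⁻¹ := by
    rw [hr_def, show ((-1:ℝ)/2) = -(1/2) by norm_num, Real.rpow_neg hu.le]
  have em32 : (1 + 2 * η ^ 2 / 9) ^ ((-3:ℝ)/2) = ((1 + 2 * η ^ 2 / 9) * r)⁻¹ := by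
    rw [show ((-3:ℝ)/2) = -(3/2) by norm_num, Real.rpow_neg hu.le,
      show ((3:ℝ)/2) = (3:ℝ)/2 from rfl, e32]
  have em52 : (1 + 2 * η ^ 2 / 9) ^ ((-5:ℝ)/2) = ((1 + 2 * η ^ 2 / 9) ^ 2 * r)⁻¹ := by
    rw [show ((-5:ℝ)/2) = -(5/2) by norm_num, Real.rpow_neg hu.le,
      show ((5:ℝ)/2) = 2 + 1/2 by norm_num, Real.rpow_add hu, ← hr_def,
      show ((2:ℝ):ℝ) = ((2:ℕ):ℝ) by norm_num, Real.rpow_natCast]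
  -- base derivative
  have hU : HasDerivAt (fun s : ℝ => 1 + 2 * s ^ 2 / 9) (4 * η / 9) η := by
    have h := (((hasDerivAt_pow 2 η).const_mul (2:ℝ)).div_const 9).const_add 1
    refine h.congr_deriv ?_
    ring
  have hW : HasDerivAt wF ((4 * η / 9) * r) η := by
    unfold wF
    have h := (hU.rpow_const (p := (3:ℝ)/2) (Or.inl hune)).const_mul (2/3 : ℝ)
    refine h.congr_deriv ?_
    rw [show ((3:ℝ)/2 - 1) = 1/2 by norm_num, ← hr_def]
    ring
  have hD : HasDerivAt DF (-(2 * η / 9) * ((1 + 2 * η ^ 2 / 9) * r)⁻¹) η := by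
    unfold DF
    have h := hU.rpow_const (p := (-1:ℝ)/2) (Or.inl hune)
    refine h.congr_deriv ?_
    rw [show ((-1:ℝ)/2 - 1) = (-3:ℝ)/2 by norm_num, em32]
    ring
  have hXI : HasDerivAt xiF ((1 - 4 * η ^ 2 / 9) * ((1 + 2 * η ^ 2 / 9) ^ 2 * r)⁻¹) η := by
    unfold xiF
    have h := (hasDerivAt_id η).mul (hU.rpow_const (p := (-3:ℝ)/2) (Or.inl hune))
    refine h.congr_deriv ?_
    rw [show ((-3:ℝ)/2 - 1) = (-5:ℝ)/2 by norm_num, em52, em32, id_eq]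
    field_simp
    ring
  have hA : HasDerivAt AF (-(8 * η / 9)) η := by
    unfold AF
    have h := (((hasDerivAt_pow 2 η).const_mul (4:ℝ)).div_const 9).const_sub 1
    refine h.congr_deriv ?_
    ring
  have hZ : HasDerivAt zF
      ((8 * η / 3 * (1 - 4 * η ^ 2 / 9) - 4 * η ^ 2 / 3 * (-(8 * η / 9)))
        / (1 - 4 * η ^ 2 / 9) ^ 2) η := by
    unfold zF
    have hN : HasDerivAt (fun s : ℝ => 4 * s ^ 2 / 3) (8 * η / 3) η := by
      have h := ((hasDerivAt_pow 2 η).const_mul (4:ℝ)).div_const 3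
      refine h.congr_deriv ?_
      ring
    have hDen : HasDerivAt (fun s : ℝ => 1 - 4 * s ^ 2 / 9) (-(8 * η / 9)) η := by
      have h := (((hasDerivAt_pow 2 η).const_mul (4:ℝ)).div_const 9).const_sub 1
      refine h.congr_deriv ?_
      ring
    exact hN.div hDen hAne
  have hProd : HasDerivAt (fun s => (-1 + DF s * wF s) * zF s)
      ((-(2 * η / 9) * ((1 + 2 * η ^ 2 / 9) * r)⁻¹ * wF η + DF η * ((4 * η / 9) * r)) * zF η
        + (-1 + DF η * wF η)
          * ((8 * η / 3 * (1 - 4 * η ^ 2 / 9) - 4 * η ^ 2 / 3 * (-(8 * η / 9)))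
              / (1 - 4 * η ^ 2 / 9) ^ 2)) η := by
    exact ((hD.mul hW).const_add (-1)).mul hZ
  refine ⟨?_, ?_, ?_, ?_, ?_⟩
  · rw [hProd.deriv, hXI.deriv]
    simp only [xiF, wF, zF, AF, DF, vF]
    simp only [e32, em12, em32]
    simp only [← hr2, ← ha]
    field_simp [hrne, hane, hηne]
    simp only [hr2, ha]
    ring
  · rw [hW.deriv, hXI.deriv]
    simp only [xiF, wF, zF, AF, DF, vF]
    simp only [e32, em12, em32]
    simp only [← hr2, ← ha]
    field_simp [hrne, hane, hηne]
    simp only [hr2, ha]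
    ring
  · rw [hA.deriv, hXI.deriv]
    simp only [xiF, wF, zF, AF, DF, vF]
    simp only [e32, em12, em32]
    simp only [← hr2, ← ha]
    field_simp [hrne, hane, hηne]
    simp only [hr2, ha]
    ring
  · rw [hD.deriv, hXI.deriv]
    simp only [xiF, wF, zF, AF, DF, vF]
    simp only [e32, em12, em32]
    simp only [← hr2, ← ha]
    field_simp [hrne, hane, hηne]
    simp only [hr2, ha]
    ring
  · simp only [xiF, wF, vF]
    simp only [e32, em32]
    rw [← hr2]
    field_simp
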